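/- Under the hypotheses of the preceding definition of D, there are exactly 16 distinct algebra homomorphisms χ: D → k, parametrized by (i, j, k) with 0 ≤ i, j < 2, 0 ≤ k < 4, given by χ(g) = (-1)^i, χ(h) = (-1)^j, χ(x) = 0, χ(a) = ξ^k, χ(b) = χ(c) = 0, χ(d) = (-1)^i(-1)^j ξ^k. -/

import Mathlib

/- The Drinfeld double `D`, presented as a quotient of the free algebra on seven
generators g (= 0), h (= 1), x (= 2), a (= 3), b (= 4), c (= 5), d (= 6). -/

namespace DPresentation

variable (k : Type*) [Field k]

noncomputable def G : FreeAlgebra k (Fin 7) := FreeAlgebra.ι k 0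
noncomputable def Hh : FreeAlgebra k (Fin 7) := FreeAlgebra.ι k 1
noncomputable def X : FreeAlgebra k (Fin 7) := FreeAlgebra.ι k 2
noncomputable def A : FreeAlgebra k (Fin 7) := FreeAlgebra.ι k 3
noncomputable def B : FreeAlgebra k (Fin 7) := FreeAlgebra.ι k 4
noncomputable def C : FreeAlgebra k (Fin 7) := FreeAlgebra.ι k 5
noncomputable def Dd : FreeAlgebra k (Fin 7) := FreeAlgebra.ι k 6

/-- The defining relations of `D`: the relations of `𝒜^bop`, the relations of `H`,
and the cross relations; `ξ` is a primitive 4-th root of unity and `s = √2`. -/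
inductive DRel (ξ s : k) : FreeAlgebra k (Fin 7) → FreeAlgebra k (Fin 7) → Prop
  -- relations of 𝒜^bop
  | g4 : DRel ξ s (G k ^ 4) 1
  | h2 : DRel ξ s (Hh k ^ 2) 1
  | gh : DRel ξ s (G k * Hh k) (Hh k * G k)
  | xh : DRel ξ s (X k * Hh k) (-(Hh k * X k))
  | xg : DRel ξ s (X k * G k) (G k * X k)
  | x2 : DRel ξ s (X k ^ 2) (1 - G k ^ 2)
  -- relations of H
  | a4 : DRel ξ s (A k ^ 4) 1
  | b2 : DRel ξ s (B k ^ 2) 0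
  | c2 : DRel ξ s (C k ^ 2) 0
  | d4 : DRel ξ s (Dd k ^ 4) 1
  | a2d2 : DRel ξ s (A k ^ 2 * Dd k ^ 2) 1
  | ad : DRel ξ s (A k * Dd k) (Dd k * A k)
  | bc : DRel ξ s (B k * C k) 0
  | cb : DRel ξ s (C k * B k) 0
  | ab : DRel ξ s (A k * B k) (ξ • (B k * A k))
  | ac : DRel ξ s (A k * C k) (ξ • (C k * A k))
  | bd : DRel ξ s (B k * Dd k) (ξ • (Dd k * B k))
  | cd : DRel ξ s (C k * Dd k) (ξ • (Dd k * C k))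
  | bdca : DRel ξ s (B k * Dd k) (C k * A k)
  | bacd : DRel ξ s (B k * A k) (C k * Dd k)
  -- cross relations
  | ag : DRel ξ s (A k * G k) (G k * A k)
  | ah : DRel ξ s (A k * Hh k) (Hh k * A k)
  | dg : DRel ξ s (Dd k * G k) (G k * Dd k)
  | dh : DRel ξ s (Dd k * Hh k) (Hh k * Dd k)
  | bg : DRel ξ s (B k * G k) (G k * B k)
  | bh : DRel ξ s (B k * Hh k) (-(Hh k * B k))
  | cg : DRel ξ s (C k * G k) (G k * C k)
  | ch : DRel ξ s (C k * Hh k) (-(Hh k * C k))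
  | ax : DRel ξ s (A k * X k + ξ • (X k * A k)) ((s * ξ) • (C k - G k * Hh k * B k))
  | dx : DRel ξ s (Dd k * X k - ξ • (X k * Dd k)) ((s * ξ) • (G k * Hh k * C k - B k))
  | bx : DRel ξ s (B k * X k + ξ • (X k * B k)) ((s * ξ) • (Dd k - G k * Hh k * A k))
  | cx : DRel ξ s (C k * X k - ξ • (X k * C k)) ((s * ξ) • (G k * Hh k * Dd k - A k))

noncomputable def D (ξ s : k) := RingQuot (DRel k ξ s)

noncomputable instance (ξ s : k) : Ring (D k ξ s) := by unfold D; infer_instance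
noncomputable instance (ξ s : k) : Algebra k (D k ξ s) := by unfold D; infer_instance

noncomputable def g (ξ s : k) : D k ξ s := RingQuot.mkAlgHom k (DRel k ξ s) (G k)
noncomputable def h (ξ s : k) : D k ξ s := RingQuot.mkAlgHom k (DRel k ξ s) (Hh k)
noncomputable def x (ξ s : k) : D k ξ s := RingQuot.mkAlgHom k (DRel k ξ s) (X k)
noncomputable def a (ξ s : k) : D k ξ s := RingQuot.mkAlgHom k (DRel k ξ s) (A k)
noncomputable def b (ξ s : k) : D k ξ s := RingQuot.mkAlgHom k (DRel k ξ s) (B k)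
noncomputable def c (ξ s : k) : D k ξ s := RingQuot.mkAlgHom k (DRel k ξ s) (C k)
noncomputable def d (ξ s : k) : D k ξ s := RingQuot.mkAlgHom k (DRel k ξ s) (Dd k)

end DPresentation


namespace DPresentation

variable {k : Type*} [Field k]

/-- Any algebra hom out of `D` is determined by its values on the seven generators. -/
lemma chi_ext {ξ s : k} {χ χ' : D k ξ s →ₐ[k] k}
    (hg : χ (g k ξ s) = χ' (g k ξ s)) (hh : χ (h k ξ s) = χ' (h k ξ s))
    (hx : χ (x k ξ s) = χ' (x k ξ s)) (ha : χ (a k ξ s) = χ' (a k ξ s))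
    (hb : χ (b k ξ s) = χ' (b k ξ s)) (hc : χ (c k ξ s) = χ' (c k ξ s))
    (hd : χ (d k ξ s) = χ' (d k ξ s)) : χ = χ' := by
  have key : χ.comp (RingQuot.mkAlgHom k (DRel k ξ s))
      = χ'.comp (RingQuot.mkAlgHom k (DRel k ξ s)) := by
    apply FreeAlgebra.hom_ext
    funext i
    fin_cases i
    · exact hg
    · exact hh
    · exact hx
    · exact ha
    · exact hb
    · exact hc
    · exact hd
  ext z
  obtain ⟨w, rfl⟩ := RingQuot.mkAlgHom_surjective k (DRel k ξ s) z
  exact AlgHom.congr_fun key w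

lemma exists_chi (ξ s : k) (hξ4 : ξ ^ 4 = 1) (gv hv av : k)
    (hgv : gv ^ 2 = 1) (hhv : hv ^ 2 = 1) (hav : av ^ 4 = 1) :
    ∃ χ : D k ξ s →ₐ[k] k,
      χ (g k ξ s) = gv ∧ χ (h k ξ s) = hv ∧ χ (x k ξ s) = 0 ∧ χ (a k ξ s) = av ∧
      χ (b k ξ s) = 0 ∧ χ (c k ξ s) = 0 ∧ χ (d k ξ s) = gv * hv * av := by
  set f : FreeAlgebra k (Fin 7) →ₐ[k] k :=
    FreeAlgebra.lift k ![gv, hv, 0, av, 0, 0, gv * hv * av] with hf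
  have fG : f (G k) = gv := by simp [hf, G]
  have fH : f (Hh k) = hv := by simp [hf, Hh]
  have fX : f (X k) = 0 := by simp [hf, X]
  have fA : f (A k) = av := by simp [hf, A]
  have fB : f (B k) = 0 := by simp [hf, B]
  have fC : f (C k) = 0 := by rw [hf]; simp only [FreeAlgebra.lift_ι_apply, C]; rfl
  have fD : f (Dd k) = gv * hv * av := by rw [hf]; simp only [FreeAlgebra.lift_ι_apply, Dd]; rfl
  have hrel : ∀ ⦃p q : FreeAlgebra k (Fin 7)⦄, DRel k ξ s p q → f p = f q := by
    intro p q rel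
    induction rel with
    | g4 => simp only [map_pow, map_one, fG]; linear_combination (gv ^ 2 + 1) * hgv
    | h2 => simp only [map_pow, map_one, fH]; exact hhv
    | gh => simp only [map_mul, fG, fH]; ring
    | xh => simp only [map_mul, map_neg, fX, fH]; ring
    | xg => simp only [map_mul, fX, fG]; ring
    | x2 => simp only [map_pow, map_sub, map_one, fX, fG]; linear_combination hgv
    | a4 => simp only [map_pow, map_one, fA]; exact hav
    | b2 => simp only [map_pow, fB]; simp
    | c2 => simp only [map_pow, fC]; simp
    | d4 =>
        simp only [map_pow, map_one, fD]
        linear_combination (hv ^ 4 * av ^ 4 * (gv ^ 2 + 1)) * hgv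
          + (av ^ 4 * (hv ^ 2 + 1)) * hhv + hav
    | a2d2 =>
        simp only [map_mul, map_pow, map_one, fA, fD]
        linear_combination (hv ^ 2 * av ^ 4) * hgv + av ^ 4 * hhv + hav
    | ad => simp only [map_mul, fA, fD]; ring
    | bc => simp only [map_mul, fB, fC]; simp
    | cb => simp only [map_mul, fB, fC]; simp
    | ab => simp only [map_mul, map_smul, smul_eq_mul, fA, fB]; ring
    | ac => simp only [map_mul, map_smul, smul_eq_mul, fA, fC]; ring
    | bd => simp only [map_mul, map_smul, smul_eq_mul, fB, fD]; ring
    | cd => simp only [map_mul, map_smul, smul_eq_mul, fC, fD]; ring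
    | bdca => simp only [map_mul, fB, fC, fA, fD]; ring
    | bacd => simp only [map_mul, fB, fA, fC, fD]; ring
    | ag => simp only [map_mul, fA, fG]; ring
    | ah => simp only [map_mul, fA, fH]; ring
    | dg => simp only [map_mul, fD, fG]; ring
    | dh => simp only [map_mul, fD, fH]; ring
    | bg => simp only [map_mul, fB, fG]; ring
    | bh => simp only [map_mul, map_neg, fB, fH]; ring
    | cg => simp only [map_mul, fC, fG]; ring
    | ch => simp only [map_mul, map_neg, fC, fH]; ring
    | ax =>
        simp only [map_add, map_mul, map_smul, map_sub, smul_eq_mul, fA, fX, fC, fG, fH, fB]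
        ring
    | dx =>
        simp only [map_add, map_mul, map_smul, map_sub, smul_eq_mul, fD, fX, fC, fG, fH, fB]
        ring
    | bx =>
        simp only [map_add, map_mul, map_smul, map_sub, smul_eq_mul, fB, fX, fD, fG, fH, fA]
        ring
    | cx =>
        simp only [map_sub, map_mul, map_smul, smul_eq_mul, fC, fX, fD, fG, fH, fA]
        linear_combination (-(s * ξ * hv ^ 2 * av)) * hgv + (-(s * ξ * av)) * hhv
  refine ⟨RingQuot.liftAlgHom k ⟨f, hrel⟩, ?_, ?_, ?_, ?_, ?_, ?_, ?_⟩
  · exact (RingQuot.liftAlgHom_mkAlgHom_apply k f hrel (G k)).trans fG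
  · exact (RingQuot.liftAlgHom_mkAlgHom_apply k f hrel (Hh k)).trans fH
  · exact (RingQuot.liftAlgHom_mkAlgHom_apply k f hrel (X k)).trans fX
  · exact (RingQuot.liftAlgHom_mkAlgHom_apply k f hrel (A k)).trans fA
  · exact (RingQuot.liftAlgHom_mkAlgHom_apply k f hrel (B k)).trans fB
  · exact (RingQuot.liftAlgHom_mkAlgHom_apply k f hrel (C k)).trans fC
  · exact (RingQuot.liftAlgHom_mkAlgHom_apply k f hrel (Dd k)).trans fD

end DPresentation

open DPresentation

/-- There are exactly 16 algebra homomorphisms `χ : D → k`, parametrized by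
`(i, j, m)` with `0 ≤ i, j < 2`, `0 ≤ m < 4`, via `χ(g) = (-1)^i`, `χ(h) = (-1)^j`,
`χ(x) = 0`, `χ(a) = ξ^m`, `χ(b) = χ(c) = 0`, `χ(d) = (-1)^i(-1)^j ξ^m`. -/
theorem stmt8 (k : Type*) [Field k] [IsAlgClosed k] [CharZero k]
    (ξ : k) (hξ : IsPrimitiveRoot ξ 4) (s : k) (hs : s ^ 2 = 2) :
    (∀ i j : Fin 2, ∀ m : Fin 4, ∃! χ : D k ξ s →ₐ[k] k,
      χ (g k ξ s) = (-1 : k) ^ (i : ℕ) ∧ χ (h k ξ s) = (-1 : k) ^ (j : ℕ) ∧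
      χ (x k ξ s) = 0 ∧ χ (a k ξ s) = ξ ^ (m : ℕ) ∧
      χ (b k ξ s) = 0 ∧ χ (c k ξ s) = 0 ∧
      χ (d k ξ s) = (-1 : k) ^ (i : ℕ) * (-1 : k) ^ (j : ℕ) * ξ ^ (m : ℕ)) ∧
    (∀ χ : D k ξ s →ₐ[k] k, ∃ i j : Fin 2, ∃ m : Fin 4,
      χ (g k ξ s) = (-1 : k) ^ (i : ℕ) ∧ χ (h k ξ s) = (-1 : k) ^ (j : ℕ) ∧
      χ (x k ξ s) = 0 ∧ χ (a k ξ s) = ξ ^ (m : ℕ) ∧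
      χ (b k ξ s) = 0 ∧ χ (c k ξ s) = 0 ∧
      χ (d k ξ s) = (-1 : k) ^ (i : ℕ) * (-1 : k) ^ (j : ℕ) * ξ ^ (m : ℕ)) := by
  have hξ4 : ξ ^ 4 = 1 := hξ.pow_eq_one
  have hξ0 : ξ ≠ 0 := by
    intro h0; rw [h0] at hξ4; norm_num at hξ4
  have hs0 : s ≠ 0 := by
    intro h0; rw [h0] at hs; norm_num at hs
  constructor
  · intro i j m
    have hg2 : ((-1 : k) ^ (i : ℕ)) ^ 2 = 1 := by
      rw [← pow_mul, mul_comm, pow_mul, neg_one_sq, one_pow]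
    have hh2 : ((-1 : k) ^ (j : ℕ)) ^ 2 = 1 := by
      rw [← pow_mul, mul_comm, pow_mul, neg_one_sq, one_pow]
    have ha4 : (ξ ^ (m : ℕ)) ^ 4 = 1 := by
      rw [← pow_mul, mul_comm, pow_mul, hξ4, one_pow]
    obtain ⟨χ, h1, h2, h3, h4, h5, h6, h7⟩ := exists_chi ξ s hξ4 _ _ _ hg2 hh2 ha4
    refine ⟨χ, ⟨h1, h2, h3, h4, h5, h6, h7⟩, ?_⟩
    rintro ψ ⟨e1, e2, e3, e4, e5, e6, e7⟩
    exact chi_ext (e1.trans h1.symm) (e2.trans h2.symm) (e3.trans h3.symm)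
      (e4.trans h4.symm) (e5.trans h5.symm) (e6.trans h6.symm) (e7.trans h7.symm)
  · intro χ
    have rel : ∀ {p q : FreeAlgebra k (Fin 7)}, DRel k ξ s p q →
        χ (RingQuot.mkAlgHom k (DRel k ξ s) p) = χ (RingQuot.mkAlgHom k (DRel k ξ s) q) :=
      fun hr => congrArg χ (RingQuot.mkAlgHom_rel k hr)
    have rel' : ∀ {p q : FreeAlgebra k (Fin 7)}, DRel k ξ s p q →
        (χ.comp (RingQuot.mkAlgHom k (DRel k ξ s))) p = (χ.comp (RingQuot.mkAlgHom k (DRel k ξ s))) q :=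
      fun hr => rel hr
    set Gv := χ (RingQuot.mkAlgHom k (DRel k ξ s) (G k)) with hGv
    set Hv := χ (RingQuot.mkAlgHom k (DRel k ξ s) (Hh k)) with hHv
    set Xv := χ (RingQuot.mkAlgHom k (DRel k ξ s) (X k)) with hXv
    set Av := χ (RingQuot.mkAlgHom k (DRel k ξ s) (A k)) with hAv
    set Bv := χ (RingQuot.mkAlgHom k (DRel k ξ s) (B k)) with hBv
    set Cv := χ (RingQuot.mkAlgHom k (DRel k ξ s) (C k)) with hCv
    set Dv := χ (RingQuot.mkAlgHom k (DRel k ξ s) (Dd k)) with hDv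
    have hH2 : Hv ^ 2 = 1 := by (have e := rel' (DRel.h2); simp only [map_pow, map_one] at e; exact e)
    have hHne : Hv ≠ 0 := by intro h0; rw [h0] at hH2; norm_num at hH2
    have hX0 : Xv = 0 := by
      have hXH : Xv * Hv = -(Hv * Xv) := by
        (have e := rel' (DRel.xh); simp only [map_mul, map_neg] at e; exact e)
      have h2xh : (2 : k) * (Xv * Hv) = 0 := by linear_combination hXH
      have hxh0 : Xv * Hv = 0 := by
        rcases mul_eq_zero.mp h2xh with h | h
        · exact absurd h two_ne_zero
        · exact h
      exact (mul_eq_zero.mp hxh0).resolve_right hHne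
    have hG2 : Gv ^ 2 = 1 := by
      have hx2 : Xv ^ 2 = 1 - Gv ^ 2 := by
        (have e := rel' (DRel.x2); simp only [map_pow, map_sub, map_one] at e; exact e)
      rw [hX0] at hx2
      linear_combination hx2
    have hB0 : Bv = 0 := by
      have hb2 : Bv ^ 2 = 0 := by
        (have e := rel' (DRel.b2); simp only [map_pow, map_zero] at e; exact e)
      exact pow_eq_zero_iff two_ne_zero |>.mp hb2
    have hC0 : Cv = 0 := by
      have hc2 : Cv ^ 2 = 0 := by
        (have e := rel' (DRel.c2); simp only [map_pow, map_zero] at e; exact e)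
      exact pow_eq_zero_iff two_ne_zero |>.mp hc2
    have hA4 : Av ^ 4 = 1 := by (have e := rel' (DRel.a4); simp only [map_pow, map_one] at e; exact e)
    obtain ⟨n, hn4, hnA⟩ := hξ.eq_pow_of_pow_eq_one hA4
    have hD : Dv = Gv * Hv * Av := by
      have hbx : Bv * Xv + ξ * (Xv * Bv) = s * ξ * (Dv - Gv * Hv * Av) := by
        (have e := rel' (DRel.bx); simp only [map_add, map_mul, map_smul, map_sub, smul_eq_mul] at e; exact e)
      rw [hB0, hX0] at hbx
      have h0 : s * ξ * (Dv - Gv * Hv * Av) = 0 := by linear_combination -hbx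
      have hsξ : s * ξ ≠ 0 := mul_ne_zero hs0 hξ0
      have := (mul_eq_zero.mp h0).resolve_left hsξ
      linear_combination this
    have hGi : ∃ i : Fin 2, Gv = (-1 : k) ^ ((i : Fin 2) : ℕ) := by
      have hgg : Gv * Gv = 1 := by rw [← pow_two]; exact hG2
      rcases mul_self_eq_one_iff.mp hgg with hg | hg
      · exact ⟨0, by simpa using hg⟩
      · exact ⟨1, by simpa using hg⟩
    have hHj : ∃ j : Fin 2, Hv = (-1 : k) ^ ((j : Fin 2) : ℕ) := by
      have hhh : Hv * Hv = 1 := by rw [← pow_two]; exact hH2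
      rcases mul_self_eq_one_iff.mp hhh with hh | hh
      · exact ⟨0, by simpa using hh⟩
      · exact ⟨1, by simpa using hh⟩
    obtain ⟨i, hGi⟩ := hGi
    obtain ⟨j, hHj⟩ := hHj
    refine ⟨i, j, ⟨n, hn4⟩, ?_, ?_, ?_, ?_, ?_, ?_, ?_⟩
    · exact hGi
    · exact hHj
    · exact hX0
    · exact hnA.symm
    · exact hB0
    · exact hC0
    · show Dv = _
      rw [hD, hGi, hHj, ← hnA]
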